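/- Let ŷ: 𝒳 → [0,1] and define the mean prediction ŷ(γ) = Σ_{x∈𝒳} P(x|γ) ŷ(x) and the standard deviation σ(γ) = √(Σ_{x∈𝒳} P(x|γ) ŷ(x)² − ŷ(γ)²). Then the indicator I₁(γ) = |dŷ(γ)/dγ| satisfies I₁(γ) ≤ σ(γ)·√F(γ) ≤ √F(γ), i.e., it is a lower bound to the square root of the Fisher information. -/

import Mathlib

open Finset Real

/-- the classification indicator `I₁` is a lower bound to `σ·√F ≤ √F`. -/
theorem stmt1 {X : Type*} [Fintype X] [Nonempty X]
    (I : Set ℝ) (hIopen : IsOpen I) (hIconn : I.OrdConnected)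
    (P : ℝ → X → ℝ)
    (hpos : ∀ γ ∈ I, ∀ x : X, 0 < P γ x)
    (hsum : ∀ γ ∈ I, ∑ x : X, P γ x = 1)
    (hdiff : ∀ x : X, ∀ γ ∈ I, DifferentiableAt ℝ (fun t => P t x) γ)
    (yhat : X → ℝ) (hy0 : ∀ x, 0 ≤ yhat x) (hy1 : ∀ x, yhat x ≤ 1)
    (γ : ℝ) (hγ : γ ∈ I) :
    |deriv (fun t => ∑ x : X, P t x * yhat x) γ| ≤
      Real.sqrt ((∑ x : X, P γ x * (yhat x) ^ 2) - (∑ x : X, P γ x * yhat x) ^ 2) *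
        Real.sqrt (∑ x : X, (deriv (fun t => P t x) γ) ^ 2 / P γ x) ∧
    Real.sqrt ((∑ x : X, P γ x * (yhat x) ^ 2) - (∑ x : X, P γ x * yhat x) ^ 2) *
        Real.sqrt (∑ x : X, (deriv (fun t => P t x) γ) ^ 2 / P γ x) ≤
      Real.sqrt (∑ x : X, (deriv (fun t => P t x) γ) ^ 2 / P γ x) := by
  set a : X → ℝ := fun x => deriv (fun t => P t x) γ with ha
  have hPpos : ∀ x, 0 < P γ x := hpos γ hγ
  set m : ℝ := ∑ x : X, P γ x * yhat x with hm
  -- derivative of mean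
  have hD : HasDerivAt (fun t => ∑ x : X, P t x * yhat x) (∑ x : X, a x * yhat x) γ :=
    HasDerivAt.fun_sum fun x _ => ((hdiff x γ hγ).hasDerivAt.mul_const (yhat x))
  have hderiv : deriv (fun t => ∑ x : X, P t x * yhat x) γ = ∑ x : X, a x * yhat x := hD.deriv
  -- sum of derivatives is zero
  have hZ : (∑ x : X, a x) = 0 := by
    have hD1 : HasDerivAt (fun t => ∑ x : X, P t x) (∑ x : X, a x) γ :=
      HasDerivAt.fun_sum fun x _ => (hdiff x γ hγ).hasDerivAt
    have heq : (fun t => ∑ x : X, P t x) =ᶠ[nhds γ] fun _ => (1 : ℝ) := by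
      filter_upwards [hIopen.mem_nhds hγ] with t ht using hsum t ht
    have := hD1.deriv
    rw [Filter.EventuallyEq.deriv_eq heq, deriv_const] at this
    exact this.symm
  have hcentered : (∑ x : X, a x * yhat x) = ∑ x : X, a x * (yhat x - m) := by
    simp [mul_sub, Finset.sum_sub_distrib, ← Finset.sum_mul, hZ]
  -- variance identity
  have hvar : (∑ x : X, P γ x * (yhat x - m) ^ 2)
      = (∑ x : X, P γ x * (yhat x) ^ 2) - m ^ 2 := by
    have h1 : ∑ x : X, P γ x = 1 := hsum γ hγ
    have : ∀ x : X, P γ x * (yhat x - m) ^ 2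
        = P γ x * (yhat x) ^ 2 - 2 * m * (P γ x * yhat x) + m ^ 2 * P γ x := by
      intro x; ring
    rw [Finset.sum_congr rfl fun x _ => this x]
    rw [Finset.sum_add_distrib, Finset.sum_sub_distrib, ← Finset.mul_sum, ← Finset.mul_sum,
      h1, ← hm]
    ring
  -- Cauchy-Schwarz
  have hCS : (∑ x : X, a x * (yhat x - m)) ^ 2 ≤
      (∑ x : X, a x ^ 2 / P γ x) * (∑ x : X, P γ x * (yhat x - m) ^ 2) := by
    have key : ∀ x : X, a x * (yhat x - m)
        = (a x / Real.sqrt (P γ x)) * (Real.sqrt (P γ x) * (yhat x - m)) := by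
      intro x
      have hs : Real.sqrt (P γ x) ≠ 0 := ne_of_gt (Real.sqrt_pos.2 (hPpos x))
      field_simp
    calc (∑ x : X, a x * (yhat x - m)) ^ 2
        = (∑ x : X, (a x / Real.sqrt (P γ x)) * (Real.sqrt (P γ x) * (yhat x - m))) ^ 2 := by
          rw [Finset.sum_congr rfl fun x _ => key x]
      _ ≤ (∑ x : X, (a x / Real.sqrt (P γ x)) ^ 2) *
            (∑ x : X, (Real.sqrt (P γ x) * (yhat x - m)) ^ 2) :=
          Finset.sum_mul_sq_le_sq_mul_sq _ _ _
      _ = (∑ x : X, a x ^ 2 / P γ x) * (∑ x : X, P γ x * (yhat x - m) ^ 2) := by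
          congr 1
          · refine Finset.sum_congr rfl fun x _ => ?_
            rw [div_pow, Real.sq_sqrt (hPpos x).le]
          · refine Finset.sum_congr rfl fun x _ => ?_
            rw [mul_pow, Real.sq_sqrt (hPpos x).le]
  have hvarnn : 0 ≤ (∑ x : X, P γ x * (yhat x) ^ 2) - m ^ 2 := by
    rw [← hvar]
    exact Finset.sum_nonneg fun x _ => mul_nonneg (hPpos x).le (sq_nonneg _)
  have hFnn : 0 ≤ ∑ x : X, a x ^ 2 / P γ x :=
    Finset.sum_nonneg fun x _ => div_nonneg (sq_nonneg _) (hPpos x).le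
  constructor
  · rw [hderiv, hcentered, ← Real.sqrt_mul hvarnn, ← Real.sqrt_sq_eq_abs]
    apply Real.sqrt_le_sqrt
    rw [← hvar]
    calc (∑ x : X, a x * (yhat x - m)) ^ 2
        ≤ (∑ x : X, a x ^ 2 / P γ x) * (∑ x : X, P γ x * (yhat x - m) ^ 2) := hCS
      _ = (∑ x : X, P γ x * (yhat x - m) ^ 2) * (∑ x : X, a x ^ 2 / P γ x) := mul_comm _ _
  · have hle1 : (∑ x : X, P γ x * (yhat x) ^ 2) - m ^ 2 ≤ 1 := by
      have h1 : ∑ x : X, P γ x = 1 := hsum γ hγ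
      have hs : (∑ x : X, P γ x * (yhat x) ^ 2) ≤ ∑ x : X, P γ x := by
        refine Finset.sum_le_sum fun x _ => ?_
        have : (yhat x) ^ 2 ≤ 1 := by nlinarith [hy0 x, hy1 x]
        nlinarith [hPpos x]
      nlinarith [sq_nonneg m]
    have : Real.sqrt ((∑ x : X, P γ x * (yhat x) ^ 2) - m ^ 2) ≤ 1 := by
      rw [show (1:ℝ) = Real.sqrt 1 by simp]
      exact Real.sqrt_le_sqrt hle1
    calc Real.sqrt ((∑ x : X, P γ x * (yhat x) ^ 2) - m ^ 2) *
          Real.sqrt (∑ x : X, a x ^ 2 / P γ x)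
        ≤ 1 * Real.sqrt (∑ x : X, a x ^ 2 / P γ x) :=
          mul_le_mul_of_nonneg_right this (Real.sqrt_nonneg _)
      _ = _ := one_mul _
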